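/- For every integer ℓ ≥ 1 there exists a set P_ℓ of 1681^ℓ real numbers together with 7ℓ symmetric binary relations E_1, ..., E_{7ℓ} on P_ℓ whose union is all pairs of P_ℓ, such that each relation is translation invariant ((x,y) ∈ E_i iff (x+C, y+C) ∈ E_i for all real C) and each graph (P_ℓ, E_i) is triangle-free, provided there exists a partition of {1, ..., 1680} into 7 sum-free sets. -/

import Mathlib

open Finset

lemma digits_zero : ∀ (n : ℕ) (g : ℕ → ℤ), (∀ k, (g k).natAbs < 10000) →
    (∑ m ∈ Finset.range n, g m * 10000 ^ m) = 0 → ∀ k < n, g k = 0 := by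
  intro n
  induction n with
  | zero => intro g _ _ k hk; omega
  | succ n ih =>
    intro g hb hs k hk
    rw [Finset.sum_range_succ'] at hs
    have h10 : ∑ m ∈ Finset.range n, g (m+1) * 10000 ^ (m+1)
        = 10000 * ∑ m ∈ Finset.range n, g (m+1) * 10000 ^ m := by
      rw [Finset.mul_sum]; apply Finset.sum_congr rfl; intro m _; ring
    rw [h10, pow_zero, mul_one] at hs
    have hdvd : (10000:ℤ) ∣ g 0 :=
      ⟨-∑ m ∈ Finset.range n, g (m+1) * 10000 ^ m, by linarith⟩
    have hg0 : g 0 = 0 := by have := hb 0; omega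
    have hS : ∑ m ∈ Finset.range n, g (m+1) * 10000 ^ m = 0 := by
      rw [hg0] at hs; omega
    rcases k with _ | k
    · exact hg0
    · exact ih (fun m => g (m+1)) (fun m => hb (m+1)) hS k (by omega)

/-- digit extension of a tuple to all of ℕ -/
def extd (ℓ : ℕ) (a : Fin ℓ → Fin 1681) (m : ℕ) : ℕ :=
  if h : m < ℓ then (a ⟨m, h⟩ : ℕ) else 0

lemma extd_le (ℓ : ℕ) (a : Fin ℓ → Fin 1681) (m : ℕ) : extd ℓ a m ≤ 1680 := by
  unfold extd
  split
  · exact Nat.lt_succ_iff.1 (Fin.is_lt _)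
  · omega

/-- the real number encoded by a tuple -/
noncomputable def wr (ℓ : ℕ) (a : Fin ℓ → Fin 1681) : ℝ :=
  ∑ m ∈ Finset.range ℓ, (extd ℓ a m : ℝ) * 10000 ^ m

def Erel (ℓ : ℕ) (A : Fin 7 → Finset ℕ) (k j : ℕ) (x y : ℝ) : Prop :=
  ∃ c : ℕ → ℤ, x - y = ∑ m ∈ Finset.range ℓ, (c m : ℝ) * 10000 ^ m ∧
    (∀ m, (c m).natAbs ≤ 1680) ∧ (∀ m < k, c m = 0) ∧
    ∃ hj : j < 7, (c k).natAbs ∈ A ⟨j, hj⟩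

lemma Erel_symm {ℓ : ℕ} {A : Fin 7 → Finset ℕ} {k j : ℕ} {x y : ℝ}
    (h : Erel ℓ A k j x y) : Erel ℓ A k j y x := by
  obtain ⟨c, h1, h2, h3, hj, h4⟩ := h
  refine ⟨fun m => -(c m), ?_, fun m => by simpa using h2 m,
    fun m hm => by simp [h3 m hm], hj, by simpa using h4⟩
  have : y - x = -(x - y) := by ring
  rw [this, h1, ← Finset.sum_neg_distrib]
  apply Finset.sum_congr rfl; intro m _; push_cast; ring

lemma wr_inj (ℓ : ℕ) : Function.Injective (wr ℓ) := by
  intro a b hab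
  have hz : ∑ m ∈ Finset.range ℓ, ((extd ℓ a m : ℤ) - (extd ℓ b m : ℤ)) * 10000 ^ m = 0 := by
    have : ((∑ m ∈ Finset.range ℓ, ((extd ℓ a m : ℤ) - (extd ℓ b m : ℤ)) * 10000 ^ m : ℤ) : ℝ)
        = 0 := by
      push_cast
      simp only [sub_mul, Finset.sum_sub_distrib]
      have := sub_eq_zero.2 hab
      unfold wr at this
      exact this
    exact_mod_cast this
  have hzz := digits_zero ℓ (fun m => (extd ℓ a m : ℤ) - (extd ℓ b m : ℤ))
    (fun m => by have := extd_le ℓ a m; have := extd_le ℓ b m; omega) hz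
  funext m
  have h1 := hzz m.1 m.2
  have h2 : extd ℓ a m.1 = extd ℓ b m.1 := by omega
  unfold extd at h2
  rw [dif_pos m.2, dif_pos m.2] at h2
  exact Fin.val_injective (by simpa using h2)

theorem multicolor_triangle_free_construction
    (A : Fin 7 → Finset ℕ)
    (hcover : (Finset.univ.biUnion A) = Finset.Icc 1 1680)
    (hdisj : ∀ i j, i ≠ j → Disjoint (A i) (A j))
    (hsf : ∀ i, ∀ x ∈ A i, ∀ y ∈ A i, x + y ∉ A i) :
    ∀ ℓ : ℕ, 1 ≤ ℓ →
      ∃ (P : Finset ℝ) (E : Fin (7 * ℓ) → ℝ → ℝ → Prop),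
        P.card = 1681 ^ ℓ ∧
        (∀ i x y, E i x y ↔ E i y x) ∧
        (∀ x ∈ P, ∀ y ∈ P, x ≠ y → ∃ i, E i x y) ∧
        (∀ i x y C, E i x y ↔ E i (x + C) (y + C)) ∧
        (∀ i : Fin (7 * ℓ), ¬ ∃ x ∈ P, ∃ y ∈ P, ∃ z ∈ P,
          x ≠ y ∧ y ≠ z ∧ x ≠ z ∧ E i x y ∧ E i y z ∧ E i x z) := by
  intro ℓ hℓ
  classical
  have hAmem : ∀ (j : Fin 7), ∀ n ∈ A j, 1 ≤ n ∧ n ≤ 1680 := by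
    intro j n hn
    have : n ∈ Finset.Icc 1 1680 := by
      rw [← hcover]; exact Finset.mem_biUnion.2 ⟨j, Finset.mem_univ j, hn⟩
    simpa using this
  refine ⟨Finset.image (wr ℓ) Finset.univ,
    fun i x y => Erel ℓ A (i.1 / 7) (i.1 % 7) x y, ?_, ?_, ?_, ?_, ?_⟩
  · rw [Finset.card_image_of_injective _ (wr_inj ℓ), Finset.card_univ, Fintype.card_fun]
    rw [Fintype.card_fin, Fintype.card_fin]
  · exact fun i x y => ⟨Erel_symm, Erel_symm⟩
  · -- covering
    intro x hx y hy hxy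
    obtain ⟨a, -, rfl⟩ := Finset.mem_image.1 hx
    obtain ⟨b, -, rfl⟩ := Finset.mem_image.1 hy
    set c : ℕ → ℤ := fun m => (extd ℓ a m : ℤ) - (extd ℓ b m : ℤ) with hc
    have hrep : wr ℓ a - wr ℓ b = ∑ m ∈ Finset.range ℓ, (c m : ℝ) * 10000 ^ m := by
      unfold wr
      rw [← Finset.sum_sub_distrib]
      apply Finset.sum_congr rfl; intro m _; rw [hc]; push_cast; ring
    have hex : ∃ m, c m ≠ 0 := by
      by_contra h
      push_neg at h
      apply hxy
      have h0 : wr ℓ a - wr ℓ b = 0 := by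
        rw [hrep]
        apply Finset.sum_eq_zero
        intro m _; rw [h m]; simp
      linarith [h0]
    set k := Nat.find hex with hkdef
    have hknz : c k ≠ 0 := Nat.find_spec hex
    have hkmin : ∀ m < k, c m = 0 := by
      intro m hm
      by_contra hcm
      exact Nat.find_min hex hm hcm
    have hkℓ : k < ℓ := by
      by_contra hkl
      apply hknz
      rw [hc]
      simp only
      unfold extd
      rw [dif_neg (by omega), dif_neg (by omega)]
      simp
    have hbound : ∀ m, (c m).natAbs ≤ 1680 := by
      intro m
      have := extd_le ℓ a m; have := extd_le ℓ b m
      rw [hc]; simp only; omega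
    have hmemI : (c k).natAbs ∈ Finset.univ.biUnion A := by
      rw [hcover]
      have := hbound k
      simp only [Finset.mem_Icc]
      omega
    obtain ⟨j, -, hj⟩ := Finset.mem_biUnion.1 hmemI
    refine ⟨⟨7 * k + j.1, by have := j.2; omega⟩, ?_⟩
    have hd : (7 * k + j.1) / 7 = k := by omega
    have hm : (7 * k + j.1) % 7 = j.1 := by omega
    simp only [hd, hm]
    refine ⟨c, hrep, hbound, hkmin, j.2, ?_⟩
    have : (⟨j.1, j.2⟩ : Fin 7) = j := rfl
    rw [this]
    exact hj
  · intro i x y C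
    have h : x + C - (y + C) = x - y := by ring
    show Erel ℓ A (i.1 / 7) (i.1 % 7) x y ↔ Erel ℓ A (i.1 / 7) (i.1 % 7) (x + C) (y + C)
    unfold Erel
    rw [h]
  · -- triangle-free
    intro i ⟨x, hx, y, hy, z, hz, hxy, hyz, hxz, exy, eyz, exz⟩
    obtain ⟨c, hc1, hc2, hc3, hj, hc4⟩ := exy
    obtain ⟨e, he1, he2, he3, hj2, he4⟩ := eyz
    obtain ⟨f, hf1, hf2, hf3, hj3, hf4⟩ := exz
    set k := i.1 / 7 with hk
    have hkℓ : k < ℓ := by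
      have := i.2; omega
    have hz0 : ∑ m ∈ Finset.range ℓ, (c m + e m - f m) * 10000 ^ m = 0 := by
      have : ((∑ m ∈ Finset.range ℓ, (c m + e m - f m) * 10000 ^ m : ℤ) : ℝ) = 0 := by
        push_cast
        simp only [add_mul, sub_mul, Finset.sum_sub_distrib, Finset.sum_add_distrib]
        rw [← hc1, ← he1, ← hf1]
        ring
      exact_mod_cast this
    have hgk := digits_zero ℓ (fun m => c m + e m - f m)
      (fun m => by have := hc2 m; have := he2 m; have := hf2 m; omega) hz0 k hkℓ
    have hAc := hAmem _ _ hc4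
    have hAe := hAmem _ _ he4
    have hAf := hAmem _ _ hf4
    have htri : (c k).natAbs + (e k).natAbs = (f k).natAbs ∨
        (e k).natAbs + (f k).natAbs = (c k).natAbs ∨
        (c k).natAbs + (f k).natAbs = (e k).natAbs := by omega
    rcases htri with h | h | h
    · exact hsf _ _ hc4 _ he4 (h ▸ hf4)
    · exact hsf _ _ he4 _ hf4 (h ▸ hc4)
    · exact hsf _ _ hc4 _ hf4 (h ▸ he4)
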